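/- Let n ≥ 1, let V be a real inner product space, let g : ℝ^{1+n} → ℝ^{(n+1)×(n+1)} be a C¹ family of symmetric matrices and Φ : ℝ^{1+n} → V be C². Then at every point, Σ_{μ=0}^{n} ∂_μ (T^μ_0(Φ)) = ⟨ Σ_{μ,α=0}^{n} g^{μα} ∂_μ ∂_α Φ, ∂_0 Φ ⟩ + (1/2) Σ_{α=0}^{n} (∂_0 g^{0α}) ⟨∂_α Φ, ∂_0 Φ⟩ + Σ_{j=1}^{n} Σ_{α=0}^{n} (∂_j g^{jα}) ⟨∂_α Φ, ∂_0 Φ⟩ − (1/2) Σ_{j=1}^{n} Σ_{β=0}^{n} (∂_0 g^{jβ}) ⟨∂_j Φ, ∂_β Φ⟩. -/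

import Mathlib

open scoped BigOperators RealInnerProductSpace

noncomputable section

/-- Standard basis vector of ℝ^{1+n}. -/
def basisVec (n : ℕ) (μ : Fin (n+1)) : Fin (n+1) → ℝ := Pi.single μ 1

/-- Partial derivative ∂_μ of a map defined on ℝ^{1+n}. -/
def pdv {n : ℕ} {V : Type*} [NormedAddCommGroup V] [NormedSpace ℝ V]
    (Φ : (Fin (n+1) → ℝ) → V) (μ : Fin (n+1)) (p : Fin (n+1) → ℝ) : V :=
  fderiv ℝ Φ p (basisVec n μ)

/-- Second partial derivative ∂_μ ∂_α. -/
def pdv2 {n : ℕ} {V : Type*} [NormedAddCommGroup V] [NormedSpace ℝ V]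
    (Φ : (Fin (n+1) → ℝ) → V) (μ α : Fin (n+1)) (p : Fin (n+1) → ℝ) : V :=
  fderiv ℝ (fun q => fderiv ℝ Φ q (basisVec n α)) p (basisVec n μ)

/-- The energy tensor T^μ_ν(Φ) built from the (inverse) metric g. -/
def Tup {n : ℕ} {V : Type*} [NormedAddCommGroup V] [InnerProductSpace ℝ V]
    (g : (Fin (n+1) → ℝ) → Fin (n+1) → Fin (n+1) → ℝ)
    (Φ : (Fin (n+1) → ℝ) → V) (μ ν : Fin (n+1)) (p : Fin (n+1) → ℝ) : ℝ :=
  (∑ α, g p μ α * ⟪pdv Φ α p, pdv Φ ν p⟫)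
    - (1/2) * (if μ = ν then (1:ℝ) else 0) *
        ∑ α, ∑ β, g p α β * ⟪pdv Φ α p, pdv Φ β p⟫

section helpers

variable {n : ℕ} {V : Type*} [NormedAddCommGroup V] [InnerProductSpace ℝ V]
variable {Φ : (Fin (n+1) → ℝ) → V} {p : Fin (n+1) → ℝ}

lemma contDiff_pdv (hΦ : ContDiff ℝ 2 Φ) (α : Fin (n+1)) : ContDiff ℝ 1 (pdv Φ α) := by
  have h : ContDiff ℝ 1 (fderiv ℝ Φ) := hΦ.fderiv_right (by norm_num)
  exact (ContinuousLinearMap.apply ℝ V (basisVec n α)).contDiff.comp h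

lemma diff_pdv (hΦ : ContDiff ℝ 2 Φ) (α : Fin (n+1)) : DifferentiableAt ℝ (pdv Φ α) p :=
  ((contDiff_pdv hΦ α).differentiable one_ne_zero).differentiableAt

lemma fderiv_pdv (α μ : Fin (n+1)) :
    fderiv ℝ (pdv Φ α) p (basisVec n μ) = pdv2 Φ μ α p := rfl

lemma pdv2_symm (hΦ : ContDiff ℝ 2 Φ) (μ α : Fin (n+1)) :
    pdv2 Φ μ α p = pdv2 Φ α μ p := by
  have hdiff : ∀ y, HasFDerivAt Φ (fderiv ℝ Φ y) y := fun y =>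
    ((hΦ.differentiable (by norm_num)) y).hasFDerivAt
  have h2 : DifferentiableAt ℝ (fderiv ℝ Φ) p :=
    (((hΦ.fderiv_right (m := 1) (by norm_num))).differentiable one_ne_zero).differentiableAt
  have hsymm := second_derivative_symmetric hdiff h2.hasFDerivAt (basisVec n μ) (basisVec n α)
  have key : ∀ v w : Fin (n+1) → ℝ, fderiv ℝ (fun q => fderiv ℝ Φ q v) p w
      = fderiv ℝ (fderiv ℝ Φ) p w v := by
    intro v w
    rw [fderiv_clm_apply h2 (differentiableAt_const v)]
    simp
  unfold pdv2
  rw [key, key]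
  exact hsymm

end helpers

section scalar

variable {n : ℕ} {p : Fin (n+1) → ℝ}

lemma pdv_sub {f h : (Fin (n+1) → ℝ) → ℝ} (hf : DifferentiableAt ℝ f p)
    (hh : DifferentiableAt ℝ h p) (μ : Fin (n+1)) :
    pdv (fun q => f q - h q) μ p = pdv f μ p - pdv h μ p := by
  unfold pdv; rw [fderiv_fun_sub hf hh]; rfl

lemma pdv_const_mul {h : (Fin (n+1) → ℝ) → ℝ} (hh : DifferentiableAt ℝ h p)
    (c : ℝ) (μ : Fin (n+1)) :
    pdv (fun q => c * h q) μ p = c * pdv h μ p := by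
  unfold pdv; rw [fderiv_const_mul hh]; rfl

lemma pdv_sum {ι : Type*} (s : Finset ι) {f : ι → (Fin (n+1) → ℝ) → ℝ}
    (hf : ∀ i ∈ s, DifferentiableAt ℝ (f i) p) (μ : Fin (n+1)) :
    pdv (fun q => ∑ i ∈ s, f i q) μ p = ∑ i ∈ s, pdv (f i) μ p := by
  unfold pdv; rw [fderiv_fun_sum hf]; simp

lemma pdv_mul {f h : (Fin (n+1) → ℝ) → ℝ} (hf : DifferentiableAt ℝ f p)
    (hh : DifferentiableAt ℝ h p) (μ : Fin (n+1)) :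
    pdv (fun q => f q * h q) μ p = pdv f μ p * h p + f p * pdv h μ p := by
  unfold pdv; rw [fderiv_fun_mul hf hh]
  simp [smul_eq_mul]; ring

end scalar

section innerlem

variable {n : ℕ} {V : Type*} [NormedAddCommGroup V] [InnerProductSpace ℝ V]
variable {Φ : (Fin (n+1) → ℝ) → V} {p : Fin (n+1) → ℝ}

lemma pdv_inner (hΦ : ContDiff ℝ 2 Φ) (α β μ : Fin (n+1)) :
    pdv (fun q => ⟪pdv Φ α q, pdv Φ β q⟫) μ p
      = ⟪pdv2 Φ μ α p, pdv Φ β p⟫ + ⟪pdv Φ α p, pdv2 Φ μ β p⟫ := by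
  have h := fderiv_inner_apply ℝ (diff_pdv (p := p) hΦ α) (diff_pdv (p := p) hΦ β) (basisVec n μ)
  rw [fderiv_pdv, fderiv_pdv] at h
  exact h.trans (add_comm _ _)

lemma diff_inner (hΦ : ContDiff ℝ 2 Φ) (α β : Fin (n+1)) :
    DifferentiableAt ℝ (fun q => ⟪pdv Φ α q, pdv Φ β q⟫) p :=
  (diff_pdv hΦ α).inner ℝ (diff_pdv hΦ β)

end innerlem

/-- divergence identity for the energy tensor, with ν = 0,
split into time and space derivatives of the metric. -/
theorem stmt1 {n : ℕ} (hn : 1 ≤ n) {V : Type*} [NormedAddCommGroup V] [InnerProductSpace ℝ V]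
    (g : (Fin (n+1) → ℝ) → Fin (n+1) → Fin (n+1) → ℝ)
    (hgsymm : ∀ p μ ν, g p μ ν = g p ν μ)
    (hg : ∀ μ ν, ContDiff ℝ 1 (fun p => g p μ ν))
    (Φ : (Fin (n+1) → ℝ) → V) (hΦ : ContDiff ℝ 2 Φ)
    (p : Fin (n+1) → ℝ) :
    (∑ μ, pdv (Tup g Φ μ 0) μ p)
      = ⟪∑ μ, ∑ α, g p μ α • pdv2 Φ μ α p, pdv Φ 0 p⟫
        + (1/2) * (∑ α, pdv (fun q => g q 0 α) 0 p * ⟪pdv Φ α p, pdv Φ 0 p⟫)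
        + (∑ j : Fin n, ∑ α, pdv (fun q => g q j.succ α) j.succ p * ⟪pdv Φ α p, pdv Φ 0 p⟫)
        - (1/2) * (∑ j : Fin n, ∑ β, pdv (fun q => g q j.succ β) 0 p * ⟪pdv Φ j.succ p, pdv Φ β p⟫) := by
  classical
  have hgd : ∀ a b : Fin (n+1), DifferentiableAt ℝ (fun q => g q a b) p :=
    fun a b => ((hg a b).differentiable one_ne_zero).differentiableAt
  -- generic product term derivative
  have hterm : ∀ a b c d ν : Fin (n+1),
      pdv (fun q => g q a b * ⟪pdv Φ c q, pdv Φ d q⟫) ν p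
        = pdv (fun q => g q a b) ν p * ⟪pdv Φ c p, pdv Φ d p⟫
          + (g p a b * ⟪pdv2 Φ ν c p, pdv Φ d p⟫ + g p a b * ⟪pdv Φ c p, pdv2 Φ ν d p⟫) := by
    intro a b c d ν
    rw [pdv_mul (hgd a b) (diff_inner hΦ c d), pdv_inner hΦ c d ν, mul_add]
  have hApdv : ∀ μ : Fin (n+1),
      pdv (fun q => ∑ α, g q μ α * ⟪pdv Φ α q, pdv Φ 0 q⟫) μ p
        = (∑ α, pdv (fun q => g q μ α) μ p * ⟪pdv Φ α p, pdv Φ 0 p⟫)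
          + (∑ α, g p μ α * ⟪pdv2 Φ μ α p, pdv Φ 0 p⟫)
          + (∑ α, g p μ α * ⟪pdv Φ α p, pdv2 Φ μ 0 p⟫) := by
    intro μ
    rw [pdv_sum (f := fun α q => g q μ α * ⟪pdv Φ α q, pdv Φ 0 q⟫) Finset.univ
      (fun α _ => (hgd μ α).mul (diff_inner hΦ α 0)) μ]
    rw [Finset.sum_congr rfl (fun α _ => hterm μ α α 0 μ)]
    simp only [Finset.sum_add_distrib]
    ring
  have hBrow : ∀ α μ : Fin (n+1),
      pdv (fun q => ∑ β, g q α β * ⟪pdv Φ α q, pdv Φ β q⟫) μ p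
        = ∑ β, (pdv (fun q => g q α β) μ p * ⟪pdv Φ α p, pdv Φ β p⟫
            + (g p α β * ⟪pdv2 Φ μ α p, pdv Φ β p⟫ + g p α β * ⟪pdv Φ α p, pdv2 Φ μ β p⟫)) := by
    intro α μ
    rw [pdv_sum (f := fun β q => g q α β * ⟪pdv Φ α q, pdv Φ β q⟫) Finset.univ
      (fun β _ => (hgd α β).mul (diff_inner hΦ α β)) μ]
    exact Finset.sum_congr rfl (fun β _ => hterm α β α β μ)
  have hBpdv : ∀ μ : Fin (n+1),
      pdv (fun q => ∑ α, ∑ β, g q α β * ⟪pdv Φ α q, pdv Φ β q⟫) μ p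
        = (∑ α, ∑ β, pdv (fun q => g q α β) μ p * ⟪pdv Φ α p, pdv Φ β p⟫)
          + (∑ α, ∑ β, g p α β * ⟪pdv2 Φ μ α p, pdv Φ β p⟫)
          + (∑ α, ∑ β, g p α β * ⟪pdv Φ α p, pdv2 Φ μ β p⟫) := by
    intro μ
    rw [pdv_sum (f := fun α q => ∑ β, g q α β * ⟪pdv Φ α q, pdv Φ β q⟫) Finset.univ
      (fun α _ => DifferentiableAt.fun_sum (fun β _ => (hgd α β).fun_mul (diff_inner hΦ α β))) μ]
    rw [Finset.sum_congr rfl (fun α _ => hBrow α μ)]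
    simp only [Finset.sum_add_distrib]
    ring
  have hTup : ∀ μ : Fin (n+1), pdv (Tup g Φ μ 0) μ p
      = ((∑ α, pdv (fun q => g q μ α) μ p * ⟪pdv Φ α p, pdv Φ 0 p⟫)
          + (∑ α, g p μ α * ⟪pdv2 Φ μ α p, pdv Φ 0 p⟫)
          + (∑ α, g p μ α * ⟪pdv Φ α p, pdv2 Φ μ 0 p⟫))
        - (1/2) * (if μ = 0 then (1:ℝ) else 0) *
          ((∑ α, ∑ β, pdv (fun q => g q α β) μ p * ⟪pdv Φ α p, pdv Φ β p⟫)
            + (∑ α, ∑ β, g p α β * ⟪pdv2 Φ μ α p, pdv Φ β p⟫)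
            + (∑ α, ∑ β, g p α β * ⟪pdv Φ α p, pdv2 Φ μ β p⟫)) := by
    intro μ
    have hA : DifferentiableAt ℝ (fun q => ∑ α, g q μ α * ⟪pdv Φ α q, pdv Φ 0 q⟫) p :=
      DifferentiableAt.fun_sum (fun α _ => (hgd μ α).fun_mul (diff_inner hΦ α 0))
    have hB : DifferentiableAt ℝ (fun q => ∑ α, ∑ β, g q α β * ⟪pdv Φ α q, pdv Φ β q⟫) p :=
      DifferentiableAt.fun_sum (fun α _ =>
        DifferentiableAt.fun_sum (fun β _ => (hgd α β).fun_mul (diff_inner hΦ α β)))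
    have e1 : Tup g Φ μ 0 = fun q =>
        (∑ α, g q μ α * ⟪pdv Φ α q, pdv Φ 0 q⟫)
          - (1/2) * (if μ = 0 then (1:ℝ) else 0) *
            (∑ α, ∑ β, g q α β * ⟪pdv Φ α q, pdv Φ β q⟫) := rfl
    rw [e1, pdv_sub hA (hB.const_mul _), pdv_const_mul hB, hApdv μ, hBpdv μ]
  have hsum : (∑ μ, pdv (Tup g Φ μ 0) μ p)
      = ((∑ μ, ∑ α, pdv (fun q => g q μ α) μ p * ⟪pdv Φ α p, pdv Φ 0 p⟫)
          + (∑ μ, ∑ α, g p μ α * ⟪pdv2 Φ μ α p, pdv Φ 0 p⟫)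
          + (∑ μ, ∑ α, g p μ α * ⟪pdv Φ α p, pdv2 Φ μ 0 p⟫))
        - (1/2) *
          ((∑ α, ∑ β, pdv (fun q => g q α β) 0 p * ⟪pdv Φ α p, pdv Φ β p⟫)
            + (∑ α, ∑ β, g p α β * ⟪pdv2 Φ 0 α p, pdv Φ β p⟫)
            + (∑ α, ∑ β, g p α β * ⟪pdv Φ α p, pdv2 Φ 0 β p⟫)) := by
    rw [Finset.sum_congr rfl (fun μ _ => hTup μ), Finset.sum_sub_distrib]
    congr 1
    · simp only [Finset.sum_add_distrib]
    · simp only [mul_ite, mul_one, mul_zero, ite_mul, zero_mul, Finset.sum_ite_eq',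
        Finset.mem_univ, if_true]
  have c3 : (∑ μ, ∑ α, g p μ α * ⟪pdv Φ α p, pdv2 Φ μ 0 p⟫)
      = ∑ α, ∑ β, g p α β * ⟪pdv2 Φ 0 α p, pdv Φ β p⟫ := by
    apply Finset.sum_congr rfl; intro μ _
    apply Finset.sum_congr rfl; intro α _
    rw [pdv2_symm hΦ μ 0, real_inner_comm]
  have cT3 : (∑ α, ∑ β, g p α β * ⟪pdv Φ α p, pdv2 Φ 0 β p⟫)
      = ∑ α, ∑ β, g p α β * ⟪pdv2 Φ 0 α p, pdv Φ β p⟫ := by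
    rw [Finset.sum_comm]
    apply Finset.sum_congr rfl; intro x _
    apply Finset.sum_congr rfl; intro y _
    rw [hgsymm p y x, real_inner_comm]
  have c2 : (∑ μ, ∑ α, g p μ α * ⟪pdv2 Φ μ α p, pdv Φ 0 p⟫)
      = ⟪∑ μ, ∑ α, g p μ α • pdv2 Φ μ α p, pdv Φ 0 p⟫ := by
    rw [sum_inner]
    apply Finset.sum_congr rfl; intro μ _
    rw [sum_inner]
    apply Finset.sum_congr rfl; intro α _
    rw [real_inner_smul_left]
  have s1 : (∑ μ, ∑ α, pdv (fun q => g q μ α) μ p * ⟪pdv Φ α p, pdv Φ 0 p⟫)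
      = (∑ α, pdv (fun q => g q 0 α) 0 p * ⟪pdv Φ α p, pdv Φ 0 p⟫)
        + ∑ j : Fin n, ∑ α, pdv (fun q => g q j.succ α) j.succ p * ⟪pdv Φ α p, pdv Φ 0 p⟫ :=
    Fin.sum_univ_succ _
  have t1 : (∑ α, ∑ β, pdv (fun q => g q α β) 0 p * ⟪pdv Φ α p, pdv Φ β p⟫)
      = (∑ α, pdv (fun q => g q 0 α) 0 p * ⟪pdv Φ α p, pdv Φ 0 p⟫)
        + ∑ j : Fin n, ∑ β, pdv (fun q => g q j.succ β) 0 p * ⟪pdv Φ j.succ p, pdv Φ β p⟫ := by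
    rw [Fin.sum_univ_succ]
    congr 1
    apply Finset.sum_congr rfl; intro β _
    rw [real_inner_comm]
  rw [hsum, c3, cT3, c2, s1, t1]
  ring
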